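/- arXiv:2009.13891 — 4 statements merged into one kernel-verified Lean document; each statement's English description precedes it below -/
import Mathlib

section
/- Let X and Y be nonempty finite types and let p : X × Y → ℝ be a probability mass function with p(x,y) > 0 for all (x,y), with marginals p_X(x) = Σ_y p(x,y) and p_Y(y) = Σ_x p(x,y), and mutual information I(X;Y) = Σ_{(x,y)} p(x,y) · log( p(x,y) / (p_X(x)·p_Y(y)) ). Fix an integer W ≥ 2 and any critic function f : X × Y → ℝ. Define the InfoNCE loss with one positive and W−1 i.i.d. negative samples as L_NCE = − Σ_{x,y₁} p(x,y₁) Σ_{y₂,…,y_W} (∏_{j=2}^{W} p_Y(y_j)) · log( exp(f(x,y₁)) / Σ_{j=1}^{W} exp(f(x,y_j)) ). Then I(X;Y) ≥ log W − L_NCE. -/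
lemma sum_prod_pi {Y : Type*} [Fintype Y] {n : ℕ} (w : Y → ℝ) (hw : ∑ y, w y = 1) :
    ∑ ys : Fin n → Y, ∏ j, w (ys j) = 1 := by
  rw [← Fintype.piFinset_univ, ← Finset.prod_univ_sum]
  simp [hw]

lemma swap_term {Y : Type*} [Fintype Y] {n : ℕ} (w g : Y → ℝ) (k : Fin n) :
    ∑ y1, ∑ ys : Fin n → Y, (w y1 * ∏ j, w (ys j)) * (g (ys k) / (g y1 + ∑ j, g (ys j)))
    = ∑ y1, ∑ ys : Fin n → Y, (w y1 * ∏ j, w (ys j)) * (g y1 / (g y1 + ∑ j, g (ys j))) := by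
  have e1 := Fintype.sum_prod_type (f := fun q : Y × (Fin n → Y) =>
    (w q.1 * ∏ j, w (q.2 j)) * (g (q.2 k) / (g q.1 + ∑ j, g (q.2 j))))
  have e2 := Fintype.sum_prod_type (f := fun q : Y × (Fin n → Y) =>
    (w q.1 * ∏ j, w (q.2 j)) * (g q.1 / (g q.1 + ∑ j, g (q.2 j))))
  rw [← e1, ← e2]
  have hinv : Function.Involutive
      (fun q : Y × (Fin n → Y) => (q.2 k, Function.update q.2 k q.1)) := by
    intro q
    simp [Function.update_idem, Function.update_eq_self]
  apply Fintype.sum_bijective _ hinv.bijective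
  rintro ⟨y1, ys⟩
  simp only [Function.apply_update (fun _ y => w y) ys k y1,
             Function.apply_update (fun _ y => g y) ys k y1]
  rw [Finset.prod_update_of_mem (Finset.mem_univ k),
      Finset.sum_update_of_mem (Finset.mem_univ k),
      Finset.prod_eq_mul_prod_sdiff_singleton_of_mem (Finset.mem_univ k) (fun j => w (ys j)),
      Finset.sum_eq_add_sum_sdiff_singleton_of_mem (Finset.mem_univ k) (fun j => g (ys j))]
  ring

lemma sum_softmax {Y : Type*} [Fintype Y] {n : ℕ} (w g : Y → ℝ)
    (hw : ∑ y, w y = 1) (hg : ∀ y, 0 < g y) :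
    ∑ y1, ∑ ys : Fin n → Y, (w y1 * ∏ j, w (ys j)) * (g y1 / (g y1 + ∑ j, g (ys j)))
      = 1 / (n + 1) := by
  have hD : ∀ (y1 : Y) (ys : Fin n → Y), 0 < g y1 + ∑ j, g (ys j) :=
    fun y1 ys => add_pos_of_pos_of_nonneg (hg y1)
      (Finset.sum_nonneg fun j _ => (hg (ys j)).le)
  have h1 : ∑ y1, ∑ ys : Fin n → Y, (w y1 * ∏ j, w (ys j)) = 1 := by
    simp_rw [← Finset.mul_sum, sum_prod_pi w hw, mul_one, hw]
  have h2 : ∀ (y1 : Y) (ys : Fin n → Y),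
      (w y1 * ∏ j, w (ys j)) =
      (w y1 * ∏ j, w (ys j)) * (g y1 / (g y1 + ∑ j, g (ys j)))
        + ∑ k, (w y1 * ∏ j, w (ys j)) * (g (ys k) / (g y1 + ∑ j, g (ys j))) := by
    intro y1 ys
    rw [← Finset.mul_sum, ← mul_add, ← Finset.sum_div, ← add_div,
        div_self (hD y1 ys).ne', mul_one]
  have h3 : (1:ℝ) =
      (∑ y1, ∑ ys : Fin n → Y, (w y1 * ∏ j, w (ys j)) * (g y1 / (g y1 + ∑ j, g (ys j))))
      + ∑ y1, ∑ ys : Fin n → Y, ∑ k,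
          (w y1 * ∏ j, w (ys j)) * (g (ys k) / (g y1 + ∑ j, g (ys j))) := by
    conv_lhs => rw [← h1]
    rw [Finset.sum_congr rfl fun y1 _ => Finset.sum_congr rfl fun ys _ => h2 y1 ys]
    simp_rw [Finset.sum_add_distrib]
  have h4 : ∑ y1, ∑ ys : Fin n → Y, ∑ k,
        (w y1 * ∏ j, w (ys j)) * (g (ys k) / (g y1 + ∑ j, g (ys j)))
      = (n : ℝ) * ∑ y1, ∑ ys : Fin n → Y,
          (w y1 * ∏ j, w (ys j)) * (g y1 / (g y1 + ∑ j, g (ys j))) := by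
    calc ∑ y1, ∑ ys : Fin n → Y, ∑ k,
          (w y1 * ∏ j, w (ys j)) * (g (ys k) / (g y1 + ∑ j, g (ys j)))
        = ∑ y1, ∑ k, ∑ ys : Fin n → Y,
          (w y1 * ∏ j, w (ys j)) * (g (ys k) / (g y1 + ∑ j, g (ys j))) :=
          Finset.sum_congr rfl fun y1 _ => Finset.sum_comm
      _ = ∑ k : Fin n, ∑ y1, ∑ ys : Fin n → Y,
          (w y1 * ∏ j, w (ys j)) * (g (ys k) / (g y1 + ∑ j, g (ys j))) := Finset.sum_comm
      _ = ∑ k : Fin n, ∑ y1, ∑ ys : Fin n → Y,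
          (w y1 * ∏ j, w (ys j)) * (g y1 / (g y1 + ∑ j, g (ys j))) :=
          Finset.sum_congr rfl fun k _ => swap_term w g k
      _ = (n : ℝ) * ∑ y1, ∑ ys : Fin n → Y,
          (w y1 * ∏ j, w (ys j)) * (g y1 / (g y1 + ∑ j, g (ys j))) := by
          rw [Finset.sum_const, Finset.card_univ, Fintype.card_fin, nsmul_eq_mul]
  rw [h4] at h3
  have hn : (0:ℝ) < (n:ℝ) + 1 := by positivity
  rw [eq_div_iff hn.ne']
  linarith



/-- The multi-sample InfoNCE lower bound on mutual information:
for a strictly positive pmf `p` on `X × Y` with marginals `pX`, `pY`, mutual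
information `I`, any critic `f` and `W ≥ 2` samples (one positive, `W − 1`
i.i.d. negatives drawn from `pY`), the InfoNCE loss `L` satisfies
`I ≥ log W − L`. -/
theorem infoNCE_lower_bound
    {X Y : Type*} [Fintype X] [Fintype Y] [Nonempty X] [Nonempty Y]
    (p : X × Y → ℝ)
    (hp_pos : ∀ xy : X × Y, 0 < p xy)
    (hp_sum : ∑ xy : X × Y, p xy = 1)
    (pX : X → ℝ) (hpX : ∀ x, pX x = ∑ y, p (x, y))
    (pY : Y → ℝ) (hpY : ∀ y, pY y = ∑ x, p (x, y))
    (I : ℝ)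
    (hI : I = ∑ x, ∑ y, p (x, y) * Real.log (p (x, y) / (pX x * pY y)))
    (W : ℕ) (hW : 2 ≤ W)
    (f : X × Y → ℝ)
    (L : ℝ)
    (hL : L = - ∑ x, ∑ y₁, p (x, y₁) *
        ∑ ys : Fin (W - 1) → Y, (∏ j, pY (ys j)) *
          Real.log (Real.exp (f (x, y₁)) /
            (Real.exp (f (x, y₁)) + ∑ j, Real.exp (f (x, ys j))))) :
    Real.log W - L ≤ I := by
  classical
  set n := W - 1 with hn
  have hWn : (W : ℝ) = (n : ℝ) + 1 := by
    have h : W = n + 1 := by omega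
    rw [h]; push_cast; ring
  have hW_pos : (0:ℝ) < (W : ℝ) := by rw [hWn]; positivity
  -- positivity of marginals
  have hpX_pos : ∀ x, 0 < pX x := fun x => by
    rw [hpX]; exact Finset.sum_pos (fun y _ => hp_pos (x, y)) Finset.univ_nonempty
  have hpY_pos : ∀ y, 0 < pY y := fun y => by
    rw [hpY]; exact Finset.sum_pos (fun x _ => hp_pos (x, y)) Finset.univ_nonempty
  have hsum' : ∑ x, ∑ y, p (x, y) = 1 := by
    rw [← Fintype.sum_prod_type]; exact hp_sum
  have hpX_sum : ∑ x, pX x = 1 := by simp_rw [hpX]; exact hsum'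
  have hpY_sum : ∑ y, pY y = 1 := by
    simp_rw [hpY]; rw [Finset.sum_comm]; exact hsum'
  have hprodY : ∑ ys : Fin n → Y, ∏ j, pY (ys j) = 1 := sum_prod_pi pY hpY_sum
  have hprodY_pos : ∀ ys : Fin n → Y, 0 < ∏ j, pY (ys j) :=
    fun ys => Finset.prod_pos fun j _ => hpY_pos (ys j)
  -- denominator positivity
  have hD_pos : ∀ (x : X) (y1 : Y) (ys : Fin n → Y),
      0 < Real.exp (f (x, y1)) + ∑ j, Real.exp (f (x, ys j)) := fun x y1 ys =>
    add_pos_of_pos_of_nonneg (Real.exp_pos _)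
      (Finset.sum_nonneg fun j _ => (Real.exp_pos _).le)
  have hratio_pos : ∀ (x : X) (y1 : Y) (ys : Fin n → Y),
      0 < Real.exp (f (x, y1)) /
        (Real.exp (f (x, y1)) + ∑ j, Real.exp (f (x, ys j))) :=
    fun x y1 ys => div_pos (Real.exp_pos _) (hD_pos x y1 ys)
  have hr_pos : ∀ (x : X) (y : Y), 0 < p (x, y) / (pX x * pY y) :=
    fun x y => div_pos (hp_pos _) (mul_pos (hpX_pos x) (hpY_pos y))
  -- helper to pull constants out of the ys-sum
  have hpull : ∀ (a c : ℝ), ∑ ys : Fin n → Y, (a * ∏ j, pY (ys j)) * c = a * c := by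
    intro a c
    calc ∑ ys : Fin n → Y, (a * ∏ j, pY (ys j)) * c
        = ∑ ys : Fin n → Y, (a * c) * ∏ j, pY (ys j) :=
          Finset.sum_congr rfl fun ys _ => by ring
      _ = (a * c) * ∑ ys : Fin n → Y, ∏ j, pY (ys j) := by rw [← Finset.mul_sum]
      _ = a * c := by rw [hprodY, mul_one]
  -- total weight facts
  have hpullw : ∀ (a : ℝ), ∑ ys : Fin n → Y, (a * ∏ j, pY (ys j)) = a := by
    intro a
    rw [← Finset.mul_sum, hprodY, mul_one]
  -- Step A : log W - L as a single triple sum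
  have hlogW : Real.log W =
      ∑ x, ∑ y₁, ∑ ys : Fin n → Y,
        (p (x, y₁) * ∏ j, pY (ys j)) * Real.log W := by
    simp_rw [hpull, ← Finset.sum_mul, hsum', one_mul]
  have stepA : Real.log W - L =
      ∑ x, ∑ y₁, ∑ ys : Fin n → Y, (p (x, y₁) * ∏ j, pY (ys j)) *
        Real.log ((W : ℝ) * (Real.exp (f (x, y₁)) /
          (Real.exp (f (x, y₁)) + ∑ j, Real.exp (f (x, ys j))))) := by
    rw [hL, sub_neg_eq_add, hlogW]
    simp_rw [Finset.mul_sum, ← mul_assoc, ← Finset.sum_add_distrib, ← mul_add]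
    refine Finset.sum_congr rfl fun x _ => Finset.sum_congr rfl fun y₁ _ =>
      Finset.sum_congr rfl fun ys _ => ?_
    rw [Real.log_mul hW_pos.ne' (hratio_pos x y₁ ys).ne']
  -- pointwise bound
  have key : ∀ (x : X) (y₁ : Y) (ys : Fin n → Y),
      Real.log ((W : ℝ) * (Real.exp (f (x, y₁)) /
          (Real.exp (f (x, y₁)) + ∑ j, Real.exp (f (x, ys j)))))
      ≤ Real.log (p (x, y₁) / (pX x * pY y₁))
        + ((W : ℝ) * (Real.exp (f (x, y₁)) /
            (Real.exp (f (x, y₁)) + ∑ j, Real.exp (f (x, ys j)))))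
          / (p (x, y₁) / (pX x * pY y₁)) - 1 := by
    intro x y₁ ys
    have hu : 0 < (W : ℝ) * (Real.exp (f (x, y₁)) /
        (Real.exp (f (x, y₁)) + ∑ j, Real.exp (f (x, ys j)))) :=
      mul_pos hW_pos (hratio_pos x y₁ ys)
    have h := Real.log_le_sub_one_of_pos (div_pos hu (hr_pos x y₁))
    rw [Real.log_div hu.ne' (hr_pos x y₁).ne'] at h
    linarith
  -- the summed bound
  have stepB :
      ∑ x, ∑ y₁, ∑ ys : Fin n → Y, (p (x, y₁) * ∏ j, pY (ys j)) *
        Real.log ((W : ℝ) * (Real.exp (f (x, y₁)) /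
          (Real.exp (f (x, y₁)) + ∑ j, Real.exp (f (x, ys j)))))
      ≤ ∑ x, ∑ y₁, ∑ ys : Fin n → Y, (p (x, y₁) * ∏ j, pY (ys j)) *
          (Real.log (p (x, y₁) / (pX x * pY y₁))
            + ((W : ℝ) * (Real.exp (f (x, y₁)) /
                (Real.exp (f (x, y₁)) + ∑ j, Real.exp (f (x, ys j)))))
              / (p (x, y₁) / (pX x * pY y₁)) - 1) := by
    refine Finset.sum_le_sum fun x _ => Finset.sum_le_sum fun y₁ _ =>
      Finset.sum_le_sum fun ys _ => ?_
    exact mul_le_mul_of_nonneg_left (key x y₁ ys)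
      (le_of_lt (mul_pos (hp_pos (x, y₁)) (hprodY_pos ys)))
  -- compute the three pieces of the bound
  have sum_logr :
      ∑ x, ∑ y₁, ∑ ys : Fin n → Y, (p (x, y₁) * ∏ j, pY (ys j)) *
        Real.log (p (x, y₁) / (pX x * pY y₁)) = I := by
    simp_rw [hpull]
    exact hI.symm
  have sum_wgt :
      ∑ x, ∑ y₁, ∑ ys : Fin n → Y, (p (x, y₁) * ∏ j, pY (ys j)) = 1 := by
    simp_rw [hpullw]
    exact hsum'
  have sum_u :
      ∑ x, ∑ y₁, ∑ ys : Fin n → Y, (p (x, y₁) * ∏ j, pY (ys j)) *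
        (((W : ℝ) * (Real.exp (f (x, y₁)) /
            (Real.exp (f (x, y₁)) + ∑ j, Real.exp (f (x, ys j)))))
          / (p (x, y₁) / (pX x * pY y₁))) = 1 := by
    have hterm : ∀ (x : X) (y₁ : Y) (ys : Fin n → Y),
        (p (x, y₁) * ∏ j, pY (ys j)) *
          (((W : ℝ) * (Real.exp (f (x, y₁)) /
              (Real.exp (f (x, y₁)) + ∑ j, Real.exp (f (x, ys j)))))
            / (p (x, y₁) / (pX x * pY y₁)))
        = ((W : ℝ) * pX x) * ((pY y₁ * ∏ j, pY (ys j)) *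
            (Real.exp (f (x, y₁)) /
              (Real.exp (f (x, y₁)) + ∑ j, Real.exp (f (x, ys j))))) := by
      intro x y₁ ys
      have h1 : p (x, y₁) ≠ 0 := (hp_pos _).ne'
      have h2 : pX x ≠ 0 := (hpX_pos x).ne'
      have h3 : pY y₁ ≠ 0 := (hpY_pos y₁).ne'
      have h4 : Real.exp (f (x, y₁)) + ∑ j, Real.exp (f (x, ys j)) ≠ 0 :=
        (hD_pos x y₁ ys).ne'
      field_simp
    calc ∑ x, ∑ y₁, ∑ ys : Fin n → Y, (p (x, y₁) * ∏ j, pY (ys j)) *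
          (((W : ℝ) * (Real.exp (f (x, y₁)) /
              (Real.exp (f (x, y₁)) + ∑ j, Real.exp (f (x, ys j)))))
            / (p (x, y₁) / (pX x * pY y₁)))
        = ∑ x, ∑ y₁, ∑ ys : Fin n → Y, ((W : ℝ) * pX x) *
            ((pY y₁ * ∏ j, pY (ys j)) *
              (Real.exp (f (x, y₁)) /
                (Real.exp (f (x, y₁)) + ∑ j, Real.exp (f (x, ys j))))) :=
          Finset.sum_congr rfl fun x _ => Finset.sum_congr rfl fun y₁ _ =>
            Finset.sum_congr rfl fun ys _ => hterm x y₁ ys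
      _ = ∑ x, ((W : ℝ) * pX x) * ∑ y₁, ∑ ys : Fin n → Y,
            ((pY y₁ * ∏ j, pY (ys j)) *
              (Real.exp (f (x, y₁)) /
                (Real.exp (f (x, y₁)) + ∑ j, Real.exp (f (x, ys j))))) := by
          simp_rw [← Finset.mul_sum]
      _ = ∑ x, ((W : ℝ) * pX x) * (1 / ((n : ℝ) + 1)) := by
          refine Finset.sum_congr rfl fun x _ => ?_
          rw [sum_softmax pY (fun y => Real.exp (f (x, y))) hpY_sum
            (fun y => Real.exp_pos _)]
      _ = ∑ x, pX x := by
          refine Finset.sum_congr rfl fun x _ => ?_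
          rw [hWn]
          field_simp
      _ = 1 := hpX_sum
  have stepC :
      ∑ x, ∑ y₁, ∑ ys : Fin n → Y, (p (x, y₁) * ∏ j, pY (ys j)) *
          (Real.log (p (x, y₁) / (pX x * pY y₁))
            + ((W : ℝ) * (Real.exp (f (x, y₁)) /
                (Real.exp (f (x, y₁)) + ∑ j, Real.exp (f (x, ys j)))))
              / (p (x, y₁) / (pX x * pY y₁)) - 1)
      = I + 1 - 1 := by
    simp_rw [mul_sub, mul_add, mul_one, Finset.sum_sub_distrib,
      Finset.sum_add_distrib]
    rw [sum_logr, sum_wgt, sum_u]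
  rw [stepA]
  rw [stepC] at stepB
  linarith
end

section
/- Let X and Y be nonempty finite types and let p : X × Y → ℝ be a probability mass function with p(x,y) > 0 for all (x,y), with marginals p_X(x) = Σ_y p(x,y) and p_Y(y) = Σ_x p(x,y), mutual information I(X;Y) = Σ_{(x,y)} p(x,y) · log( p(x,y) / (p_X(x)·p_Y(y)) ), and optimal critic (density ratio) g(x,y) = p(x,y) / (p_X(x)·p_Y(y)). Fix an integer W ≥ 2 and define L_upper = − Σ_{x,y⁺} p(x,y⁺) Σ_{y₁,…,y_{W−1}} (∏_{j=1}^{W−1} p_Y(y_j)) · log( g(x,y⁺) / Σ_{j=1}^{W−1} g(x,y_j) ), i.e. the contrastive loss whose denominator ranges only over the W−1 i.i.d. negative samples. Then I(X;Y) ≤ log W − L_upper (equivalently, L_upper ≤ −I(X;Y) + log W). -/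
/-- Proposition 1 of the paper: with the optimal density-ratio
critic `g(x,y) = p(x,y)/(pX x · pY y)`, the contrastive loss `L_upper` whose
denominator ranges only over the `W − 1` i.i.d. negative samples gives an
upper bound on mutual information: `I ≤ log W − L_upper`. -/
theorem contrastive_upper_bound
    {X Y : Type*} [Fintype X] [Fintype Y] [Nonempty X] [Nonempty Y]
    (p : X × Y → ℝ)
    (hp_pos : ∀ xy : X × Y, 0 < p xy)
    (hp_sum : ∑ xy : X × Y, p xy = 1)
    (pX : X → ℝ) (hpX : ∀ x, pX x = ∑ y, p (x, y))
    (pY : Y → ℝ) (hpY : ∀ y, pY y = ∑ x, p (x, y))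
    (I : ℝ)
    (hI : I = ∑ x, ∑ y, p (x, y) * Real.log (p (x, y) / (pX x * pY y)))
    (g : X × Y → ℝ)
    (hg : ∀ x y, g (x, y) = p (x, y) / (pX x * pY y))
    (W : ℕ) (hW : 2 ≤ W)
    (Lupper : ℝ)
    (hLupper : Lupper = - ∑ x, ∑ ypos, p (x, ypos) *
        ∑ ys : Fin (W - 1) → Y, (∏ j, pY (ys j)) *
          Real.log (g (x, ypos) / ∑ j, g (x, ys j))) :
    I ≤ Real.log W - Lupper := by
  classical
  have hnpos : 0 < W - 1 := by omega
  haveI : Nonempty (Fin (W - 1)) := ⟨⟨0, hnpos⟩⟩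
  -- positivity facts
  have hpXpos : ∀ x, 0 < pX x := fun x => by
    rw [hpX]; exact Finset.sum_pos (fun y _ => hp_pos _) Finset.univ_nonempty
  have hpYpos : ∀ y, 0 < pY y := fun y => by
    rw [hpY]; exact Finset.sum_pos (fun x _ => hp_pos _) Finset.univ_nonempty
  have hgpos : ∀ x y, 0 < g (x, y) := fun x y => by
    rw [hg]; exact div_pos (hp_pos _) (mul_pos (hpXpos x) (hpYpos y))
  have hSpos : ∀ (x : X) (ys : Fin (W - 1) → Y), 0 < ∑ j, g (x, ys j) := fun x ys =>
    Finset.sum_pos (fun j _ => hgpos x (ys j)) Finset.univ_nonempty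
  have hwpos : ∀ ys : Fin (W - 1) → Y, 0 < ∏ j, pY (ys j) := fun ys =>
    Finset.prod_pos (fun j _ => hpYpos (ys j))
  -- sum of marginals
  have hpY1 : ∑ y, pY y = 1 := by
    rw [Fintype.sum_prod_type] at hp_sum
    simp only [hpY]
    rw [Finset.sum_comm]; exact hp_sum
  have hpX1 : ∑ x, pX x = 1 := by
    rw [Fintype.sum_prod_type] at hp_sum
    simp only [hpX]; exact hp_sum
  -- weights sum to one
  have hw1 : ∑ ys : Fin (W - 1) → Y, ∏ j, pY (ys j) = 1 := by
    rw [← Fintype.prod_sum (fun (_ : Fin (W - 1)) (y : Y) => pY y)]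
    simp [hpY1]
  -- expected critic value over a negative sample is one
  have hgy1 : ∀ x, ∑ y, pY y * g (x, y) = 1 := by
    intro x
    have : ∀ y, pY y * g (x, y) = p (x, y) / pX x := by
      intro y
      have h1 := (hpYpos y).ne'
      have h2 := (hpXpos x).ne'
      rw [hg]
      field_simp
    simp only [this, ← Finset.sum_div, ← hpX x]
    exact div_self (hpXpos x).ne'
  -- mean of the denominator is W - 1
  have hmeanS : ∀ x, ∑ ys : Fin (W - 1) → Y,
      (∏ j, pY (ys j)) * (∑ j, g (x, ys j)) = (W - 1 : ℕ) := by
    intro x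
    have step : ∀ j₀ : Fin (W - 1),
        ∑ ys : Fin (W - 1) → Y, (∏ j, pY (ys j)) * g (x, ys j₀) = 1 := by
      intro j₀
      have hterm : ∀ ys : Fin (W - 1) → Y,
          (∏ j, pY (ys j)) * g (x, ys j₀)
            = ∏ j, (pY (ys j) * if j = j₀ then g (x, ys j) else 1) := by
        intro ys
        rw [Finset.prod_mul_distrib]
        congr 1
        rw [Finset.prod_ite_eq' Finset.univ j₀ (fun j => g (x, ys j))]
        simp
      simp only [hterm]
      rw [← Fintype.prod_sum
        (fun (j : Fin (W - 1)) (y : Y) => pY y * if j = j₀ then g (x, y) else 1)]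
      have : ∀ j : Fin (W - 1),
          (∑ y, pY y * if j = j₀ then g (x, y) else 1) = 1 := by
        intro j
        by_cases h : j = j₀ <;> simp [h, hgy1 x, hpY1]
      simp [hgy1 x, hpY1]
    calc ∑ ys : Fin (W - 1) → Y, (∏ j, pY (ys j)) * (∑ j, g (x, ys j))
        = ∑ ys : Fin (W - 1) → Y, ∑ j, (∏ k, pY (ys k)) * g (x, ys j) := by
          simp [Finset.mul_sum]
      _ = ∑ j : Fin (W - 1), ∑ ys : Fin (W - 1) → Y,
            (∏ k, pY (ys k)) * g (x, ys j) := Finset.sum_comm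
      _ = ∑ _j : Fin (W - 1), (1 : ℝ) := by simp only [step]
      _ = (W - 1 : ℕ) := by simp
  -- Jensen: expected log of denominator is at most log W
  have hJ : ∀ x, ∑ ys : Fin (W - 1) → Y,
      (∏ j, pY (ys j)) * Real.log (∑ j, g (x, ys j)) ≤ Real.log W := by
    intro x
    have hconc := strictConcaveOn_log_Ioi.concaveOn
    have := hconc.le_map_sum (t := Finset.univ)
      (w := fun ys : Fin (W - 1) → Y => ∏ j, pY (ys j))
      (p := fun ys : Fin (W - 1) → Y => ∑ j, g (x, ys j))
      (fun ys _ => (hwpos ys).le) hw1 (fun ys _ => hSpos x ys)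
    simp only [smul_eq_mul] at this
    refine this.trans ?_
    rw [hmeanS x]
    apply Real.log_le_log (by exact_mod_cast hnpos)
    exact_mod_cast Nat.sub_le W 1
  -- split the log inside Lupper
  have hsplit : ∀ (x : X) (ypos : Y),
      ∑ ys : Fin (W - 1) → Y, (∏ j, pY (ys j)) *
          Real.log (g (x, ypos) / ∑ j, g (x, ys j))
        = Real.log (g (x, ypos))
          - ∑ ys : Fin (W - 1) → Y, (∏ j, pY (ys j)) *
              Real.log (∑ j, g (x, ys j)) := by
    intro x ypos
    have : ∀ ys : Fin (W - 1) → Y,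
        (∏ j, pY (ys j)) * Real.log (g (x, ypos) / ∑ j, g (x, ys j))
          = (∏ j, pY (ys j)) * Real.log (g (x, ypos))
            - (∏ j, pY (ys j)) * Real.log (∑ j, g (x, ys j)) := by
      intro ys
      rw [Real.log_div (hgpos x ypos).ne' (hSpos x ys).ne']
      ring
    simp only [this, Finset.sum_sub_distrib, ← Finset.sum_mul, hw1, one_mul]
  -- rewrite -Lupper
  have hL : - Lupper = I - ∑ x, pX x *
      ∑ ys : Fin (W - 1) → Y, (∏ j, pY (ys j)) *
        Real.log (∑ j, g (x, ys j)) := by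
    rw [hLupper, neg_neg, hI, ← Finset.sum_sub_distrib]
    refine Finset.sum_congr rfl fun x _ => ?_
    simp only [hsplit, mul_sub]
    rw [Finset.sum_sub_distrib, ← Finset.sum_mul, ← hpX x]
    congr 1
    exact Finset.sum_congr rfl fun ypos _ => by rw [hg]
  -- conclude
  have hfinal : ∑ x, pX x *
      ∑ ys : Fin (W - 1) → Y, (∏ j, pY (ys j)) *
        Real.log (∑ j, g (x, ys j)) ≤ Real.log W := by
    calc ∑ x, pX x * ∑ ys : Fin (W - 1) → Y, (∏ j, pY (ys j)) *
          Real.log (∑ j, g (x, ys j))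
        ≤ ∑ x, pX x * Real.log W :=
          Finset.sum_le_sum (fun x _ =>
            mul_le_mul_of_nonneg_left (hJ x) (hpXpos x).le)
      _ = Real.log W := by rw [← Finset.sum_mul, hpX1, one_mul]
  linarith
end

section
/- Let X and Y be nonempty finite types and let p : X × Y → ℝ be a probability mass function with p(x,y) > 0 for all (x,y), with marginals p_X, p_Y, mutual information I(X;Y) = Σ_{(x,y)} p(x,y) · log( p(x,y) / (p_X(x)·p_Y(y)) ), and optimal critic g(x,y) = p(x,y)/(p_X(x)·p_Y(y)). Fix an integer W ≥ 2 and define L_upper = − Σ_{x,y⁺} p(x,y⁺) Σ_{y₁,…,y_{W−1}} (∏_{j=1}^{W−1} p_Y(y_j)) · log( g(x,y⁺) / Σ_{j=1}^{W−1} g(x,y_j) ). Then the sharper bound L_upper ≤ −I(X;Y) + log(W−1) holds, i.e. I(X;Y) ≤ log(W−1) − L_upper. -/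
/-- sharper intermediate bound in the proof of Proposition 1:
with the optimal density-ratio critic `g(x,y) = p(x,y)/(pX x · pY y)`, the
contrastive loss `L_upper` whose denominator ranges only over the `W − 1`
i.i.d. negative samples satisfies `I ≤ log (W − 1) − L_upper`. -/
theorem contrastive_upper_bound_sharp
    {X Y : Type*} [Fintype X] [Fintype Y] [Nonempty X] [Nonempty Y]
    (p : X × Y → ℝ)
    (hp_pos : ∀ xy : X × Y, 0 < p xy)
    (hp_sum : ∑ xy : X × Y, p xy = 1)
    (pX : X → ℝ) (hpX : ∀ x, pX x = ∑ y, p (x, y))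
    (pY : Y → ℝ) (hpY : ∀ y, pY y = ∑ x, p (x, y))
    (I : ℝ)
    (hI : I = ∑ x, ∑ y, p (x, y) * Real.log (p (x, y) / (pX x * pY y)))
    (g : X × Y → ℝ)
    (hg : ∀ x y, g (x, y) = p (x, y) / (pX x * pY y))
    (W : ℕ) (hW : 2 ≤ W)
    (Lupper : ℝ)
    (hLupper : Lupper = - ∑ x, ∑ ypos, p (x, ypos) *
        ∑ ys : Fin (W - 1) → Y, (∏ j, pY (ys j)) *
          Real.log (g (x, ypos) / ∑ j, g (x, ys j))) :
    I ≤ Real.log ((W : ℝ) - 1) - Lupper := by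
  classical
  set m := W - 1 with hmdef
  have hm1 : 1 ≤ m := by omega
  have hmR : (0:ℝ) < (m:ℝ) := by exact_mod_cast hm1
  have hcast : ((W:ℝ) - 1) = (m:ℝ) := by
    have : ((m:ℕ):ℝ) = (W:ℝ) - 1 := by
      rw [hmdef, Nat.cast_sub (by omega)]; simp
    linarith
  have hpX_pos : ∀ x, 0 < pX x := fun x => by
    rw [hpX]; exact Finset.sum_pos (fun y _ => hp_pos (x, y)) Finset.univ_nonempty
  have hpY_pos : ∀ y, 0 < pY y := fun y => by
    rw [hpY]; exact Finset.sum_pos (fun x _ => hp_pos (x, y)) Finset.univ_nonempty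
  have hg_pos : ∀ x y, 0 < g (x, y) := fun x y => by
    rw [hg]; exact div_pos (hp_pos _) (mul_pos (hpX_pos x) (hpY_pos y))
  have hpX_sum : ∑ x, pX x = 1 := by
    simp only [hpX]; rw [← Fintype.sum_prod_type]; exact hp_sum
  have hpY_sum : ∑ y, pY y = 1 := by
    simp only [hpY]; rw [Finset.sum_comm, ← Fintype.sum_prod_type]; exact hp_sum
  -- expectation of one negative critic value
  have hgexp : ∀ x, ∑ y, pY y * g (x, y) = 1 := by
    intro x
    have : ∀ y, pY y * g (x, y) = p (x, y) / pX x := by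
      intro y
      rw [hg]
      field_simp [(hpY_pos y).ne', (hpX_pos x).ne']
    simp only [this]
    rw [← Finset.sum_div, ← hpX x, div_self (hpX_pos x).ne']
  -- total mass of the product distribution over negatives
  have hprod1 : ∑ ys : Fin m → Y, (∏ j, pY (ys j)) = 1 := by
    have h := Finset.prod_univ_sum (fun _ : Fin m => (Finset.univ : Finset Y))
      (fun _ y => pY y)
    rw [Fintype.piFinset_univ] at h
    rw [← h]
    simp [hpY_sum]
  -- expectation of the sum of negatives is m
  have hE : ∀ x, ∑ ys : Fin m → Y, (∏ j, pY (ys j)) * (∑ j, g (x, ys j)) = (m:ℝ) := by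
    intro x
    have hswap : ∑ ys : Fin m → Y, (∏ j, pY (ys j)) * (∑ j, g (x, ys j))
        = ∑ j : Fin m, ∑ ys : Fin m → Y, (∏ i, pY (ys i)) * g (x, ys j) := by
      rw [Finset.sum_comm]
      congr 1
      ext ys
      rw [Finset.mul_sum]
    rw [hswap]
    have hone : ∀ j : Fin m, ∑ ys : Fin m → Y, (∏ i, pY (ys i)) * g (x, ys j) = 1 := by
      intro j
      set F : Fin m → Y → ℝ :=
        Function.update (fun _ y => pY y) j (fun y => pY y * g (x, y)) with hF
      have hterm : ∀ ys : Fin m → Y,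
          (∏ i, pY (ys i)) * g (x, ys j) = ∏ i, F i (ys i) := by
        intro ys
        rw [← Finset.mul_prod_erase Finset.univ (fun i => F i (ys i)) (Finset.mem_univ j),
            ← Finset.mul_prod_erase Finset.univ (fun i => pY (ys i)) (Finset.mem_univ j)]
        have h1 : F j (ys j) = pY (ys j) * g (x, ys j) := by
          rw [hF, Function.update_self]
        have h2 : ∀ i ∈ Finset.univ.erase j, F i (ys i) = pY (ys i) := by
          intro i hi
          rw [hF, Function.update_of_ne (Finset.ne_of_mem_erase hi)]
        rw [h1, Finset.prod_congr rfl h2]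
        ring
      simp only [hterm]
      have h := Finset.prod_univ_sum (fun _ : Fin m => (Finset.univ : Finset Y)) F
      rw [Fintype.piFinset_univ] at h
      rw [← h]
      rw [← Finset.mul_prod_erase Finset.univ (fun i => ∑ y, F i y) (Finset.mem_univ j)]
      have h1 : ∑ y, F j y = 1 := by
        simp only [hF, Function.update_self]
        exact hgexp x
      have h2 : ∀ i ∈ Finset.univ.erase j, (∑ y, F i y) = 1 := by
        intro i hi
        simp only [hF, Function.update_of_ne (Finset.ne_of_mem_erase hi)]
        exact hpY_sum
      rw [h1, Finset.prod_congr rfl h2]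
      simp
    rw [Finset.sum_congr rfl (fun j _ => hone j)]
    simp
  -- the key Jensen-type bound (via log t ≤ t - 1)
  have hT : ∀ x, ∑ ys : Fin m → Y, (∏ j, pY (ys j)) * Real.log (∑ j, g (x, ys j))
      ≤ Real.log (m:ℝ) := by
    intro x
    have hS_pos : ∀ ys : Fin m → Y, 0 < ∑ j, g (x, ys j) := by
      intro ys
      have : Nonempty (Fin m) := Fin.pos_iff_nonempty.mp (by omega)
      exact Finset.sum_pos (fun j _ => hg_pos x (ys j)) Finset.univ_nonempty
    have hstep : ∀ ys : Fin m → Y,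
        (∏ j, pY (ys j)) * Real.log (∑ j, g (x, ys j))
          ≤ (∏ j, pY (ys j)) * ((∑ j, g (x, ys j)) / m - 1 + Real.log m) := by
      intro ys
      have hprodpos : (0:ℝ) ≤ ∏ j, pY (ys j) :=
        Finset.prod_nonneg (fun j _ => (hpY_pos (ys j)).le)
      apply mul_le_mul_of_nonneg_left _ hprodpos
      have h1 : Real.log ((∑ j, g (x, ys j)) / m) ≤ (∑ j, g (x, ys j)) / m - 1 :=
        Real.log_le_sub_one_of_pos (div_pos (hS_pos ys) hmR)
      rw [Real.log_div (hS_pos ys).ne' hmR.ne'] at h1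
      linarith
    calc ∑ ys : Fin m → Y, (∏ j, pY (ys j)) * Real.log (∑ j, g (x, ys j))
        ≤ ∑ ys : Fin m → Y, (∏ j, pY (ys j)) *
            ((∑ j, g (x, ys j)) / m - 1 + Real.log m) :=
          Finset.sum_le_sum (fun ys _ => hstep ys)
      _ = (∑ ys : Fin m → Y, (∏ j, pY (ys j)) * (∑ j, g (x, ys j))) / m
            + (∑ ys : Fin m → Y, (∏ j, pY (ys j))) * (Real.log m - 1) := by
          have hr : ∀ ys : Fin m → Y, (∏ j, pY (ys j)) *
              ((∑ j, g (x, ys j)) / m - 1 + Real.log m)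
              = ((∏ j, pY (ys j)) * (∑ j, g (x, ys j))) / m
                + (∏ j, pY (ys j)) * (Real.log m - 1) := fun ys => by ring
          rw [Finset.sum_congr rfl (fun ys _ => hr ys), Finset.sum_add_distrib,
            ← Finset.sum_div, ← Finset.sum_mul]
      _ = Real.log m := by
          rw [hE x, hprod1, div_self hmR.ne']
          ring
  -- rewrite Lupper
  have hLrw : Lupper = -I + ∑ x, pX x *
      (∑ ys : Fin m → Y, (∏ j, pY (ys j)) * Real.log (∑ j, g (x, ys j))) := by
    rw [hLupper, hI]
    have hinner : ∀ x ypos, p (x, ypos) *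
        ∑ ys : Fin m → Y, (∏ j, pY (ys j)) * Real.log (g (x, ypos) / ∑ j, g (x, ys j))
        = p (x, ypos) * Real.log (p (x, ypos) / (pX x * pY ypos))
          - p (x, ypos) * (∑ ys : Fin m → Y, (∏ j, pY (ys j)) *
              Real.log (∑ j, g (x, ys j))) := by
      intro x ypos
      have hS_pos : ∀ ys : Fin m → Y, 0 < ∑ j, g (x, ys j) := by
        intro ys
        have : Nonempty (Fin m) := Fin.pos_iff_nonempty.mp (by omega)
        exact Finset.sum_pos (fun j _ => hg_pos x (ys j)) Finset.univ_nonempty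
      have hlogdiv : ∀ ys : Fin m → Y,
          Real.log (g (x, ypos) / ∑ j, g (x, ys j))
            = Real.log (g (x, ypos)) - Real.log (∑ j, g (x, ys j)) := fun ys =>
        Real.log_div (hg_pos x ypos).ne' (hS_pos ys).ne'
      simp only [hlogdiv, mul_sub]
      rw [Finset.sum_sub_distrib, ← Finset.sum_mul, hprod1, one_mul, hg, mul_sub]
    simp only [hinner]
    rw [Finset.sum_congr rfl (fun x _ => Finset.sum_sub_distrib _ _), Finset.sum_sub_distrib]
    have : ∀ x, ∑ ypos, p (x, ypos) * (∑ ys : Fin m → Y, (∏ j, pY (ys j)) *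
        Real.log (∑ j, g (x, ys j)))
        = pX x * (∑ ys : Fin m → Y, (∏ j, pY (ys j)) *
            Real.log (∑ j, g (x, ys j))) := by
      intro x
      rw [← Finset.sum_mul, ← hpX x]
    rw [Finset.sum_congr rfl (fun x _ => this x)]
    ring
  -- conclude
  rw [hcast, hLrw]
  have hfinal : ∑ x, pX x *
      (∑ ys : Fin m → Y, (∏ j, pY (ys j)) * Real.log (∑ j, g (x, ys j)))
      ≤ Real.log (m:ℝ) := by
    calc ∑ x, pX x * (∑ ys : Fin m → Y, (∏ j, pY (ys j)) * Real.log (∑ j, g (x, ys j)))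
        ≤ ∑ x, pX x * Real.log (m:ℝ) :=
          Finset.sum_le_sum (fun x _ =>
            mul_le_mul_of_nonneg_left (hT x) (hpX_pos x).le)
      _ = Real.log (m:ℝ) := by rw [← Finset.sum_mul, hpX_sum, one_mul]
  linarith
end

section
/- Let X, Y, Z be nonempty finite types and let p be a strictly positive probability mass function on X × Y × Z, regarded as the joint distribution of a triple of random variables (the task embedding c_pos, the context c_{1:i} of the first i transitions, and the context c_{1:i−1} of the first i−1 transitions). Let I(X;Y) and I(X;Z) denote the mutual informations computed from the corresponding two-dimensional marginals of p, and let g_Y(x,y) = p_{XY}(x,y)/(p_X(x)·p_Y(y)) and g_Z(x,z) = p_{XZ}(x,z)/(p_X(x)·p_Z(z)) be the density-ratio critics. Fix W ≥ 2 and define L_lower = − Σ_{x,y₁} p_{XY}(x,y₁) Σ_{y₂,…,y_W} (∏_{j=2}^{W} p_Y(y_j)) · log( g_Y(x,y₁) / Σ_{j=1}^{W} g_Y(x,y_j) ) and L_upper = − Σ_{x,z⁺} p_{XZ}(x,z⁺) Σ_{z₁,…,z_{W−1}} (∏_{j=1}^{W−1} p_Z(z_j)) · log( g_Z(x,z⁺)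 / Σ_{j=1}^{W−1} g_Z(x,z_j) ). Then I(X;Y) − I(X;Z) ≥ L_upper − L_lower. -/
open Finset
lemma aux_prod_update {Y : Type*} [Fintype Y] (q : Y → ℝ) {K : ℕ} (ys : Fin K → Y) (i : Fin K) (y : Y) :
    ∏ j, q (Function.update ys i y j) = q y * ∏ j ∈ Finset.univ.erase i, q (ys j) := by
  have h : ∀ j ∈ Finset.univ, q (Function.update ys i y j)
      = Function.update (fun j => q (ys j)) i (q y) j := by
    intro j _
    rcases eq_or_ne j i with rfl | hne
    · simp
    · simp [Function.update_of_ne hne]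
  rw [Finset.prod_congr rfl h, Finset.prod_update_of_mem (Finset.mem_univ i),
    Finset.sdiff_singleton_eq_erase]

lemma aux_sum_update {Y : Type*} [Fintype Y] (g : Y → ℝ) {K : ℕ} (ys : Fin K → Y) (i : Fin K) (y : Y) :
    ∑ j, g (Function.update ys i y j) = g y + ∑ j ∈ Finset.univ.erase i, g (ys j) := by
  have h : ∀ j ∈ Finset.univ, g (Function.update ys i y j)
      = Function.update (fun j => g (ys j)) i (g y) j := by
    intro j _
    rcases eq_or_ne j i with rfl | hne
    · simp
    · simp [Function.update_of_ne hne]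
  rw [Finset.sum_congr rfl h, Finset.sum_update_of_mem (Finset.mem_univ i),
    Finset.sdiff_singleton_eq_erase]

def auxEquiv {Y : Type*} {K : ℕ} (i : Fin K) : Y × (Fin K → Y) ≃ Y × (Fin K → Y) where
  toFun p := (p.2 i, Function.update p.2 i p.1)
  invFun p := (p.2 i, Function.update p.2 i p.1)
  left_inv p := by refine Prod.ext ?_ ?_ <;> simp [Function.update_idem]
  right_inv p := by refine Prod.ext ?_ ?_ <;> simp [Function.update_idem]

lemma aux_sym {Y : Type*} [Fintype Y] (q g : Y → ℝ) {K : ℕ} (i : Fin K) :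
    ∑ y1, ∑ ys : Fin K → Y, (q y1 * ∏ j, q (ys j)) * (g (ys i) / (g y1 + ∑ j, g (ys j)))
      = ∑ y1, ∑ ys : Fin K → Y, (q y1 * ∏ j, q (ys j)) * (g y1 / (g y1 + ∑ j, g (ys j))) := by
  have key : ∑ p : Y × (Fin K → Y),
        (q p.1 * ∏ j, q (p.2 j)) * (g (p.2 i) / (g p.1 + ∑ j, g (p.2 j)))
      = ∑ p : Y × (Fin K → Y),
        (q p.1 * ∏ j, q (p.2 j)) * (g p.1 / (g p.1 + ∑ j, g (p.2 j))) := by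
    refine Fintype.sum_equiv (auxEquiv i) _ _ ?_
    rintro ⟨y1, ys⟩
    show (q y1 * ∏ j, q (ys j)) * (g (ys i) / (g y1 + ∑ j, g (ys j)))
        = (q (ys i) * ∏ j, q (Function.update ys i y1 j)) *
          (g (ys i) / (g (ys i) + ∑ j, g (Function.update ys i y1 j)))
    rw [aux_prod_update q ys i y1, aux_sum_update g ys i y1,
        ← Finset.mul_prod_erase Finset.univ (fun j => q (ys j)) (Finset.mem_univ i),
        ← Finset.add_sum_erase Finset.univ (fun j => g (ys j)) (Finset.mem_univ i)]
    ring
  rw [Fintype.sum_prod_type, Fintype.sum_prod_type] at key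
  exact key
lemma aux_weight_sum {Y : Type*} [Fintype Y] (q : Y → ℝ) (hq1 : ∑ y, q y = 1) (K : ℕ) :
    ∑ ys : Fin K → Y, ∏ j, q (ys j) = 1 := by
  have h := Finset.prod_univ_sum (fun _ : Fin K => (Finset.univ : Finset Y)) (fun _ y => q y)
  rw [Fintype.piFinset_univ] at h
  rw [← h]
  simp [hq1]

lemma aux_weight_g_sum {Y : Type*} [Fintype Y] (q g : Y → ℝ)
    (hq1 : ∑ y, q y = 1) (hqg : ∑ y, q y * g y = 1) {K : ℕ} (j : Fin K) :
    ∑ ys : Fin K → Y, (∏ i, q (ys i)) * g (ys j) = 1 := by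
  have h := Finset.prod_univ_sum (fun _ : Fin K => (Finset.univ : Finset Y))
      (fun (i : Fin K) (y : Y) => q y * if i = j then g y else 1)
  rw [Fintype.piFinset_univ] at h
  have h2 : ∀ ys : Fin K → Y,
      (∏ i, (q (ys i) * if i = j then g (ys i) else 1)) = (∏ i, q (ys i)) * g (ys j) := by
    intro ys
    rw [Finset.prod_mul_distrib, Finset.prod_ite_eq' Finset.univ j (fun i => g (ys i))]
    simp
  calc ∑ ys : Fin K → Y, (∏ i, q (ys i)) * g (ys j)
      = ∑ ys : Fin K → Y, ∏ i, (q (ys i) * if i = j then g (ys i) else 1) :=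
        (Finset.sum_congr rfl fun ys _ => (h2 ys)).symm
    _ = ∏ i : Fin K, ∑ y, (q y * if i = j then g y else 1) := h.symm
    _ = 1 := by
        apply Finset.prod_eq_one
        intro i _
        by_cases hij : i = j
        · simp only [hij, if_pos rfl]; exact hqg
        · simp [hij, hq1]

lemma aux_log_ge (t : ℝ) (ht : 0 < t) : 1 - 1 / t ≤ Real.log t := by
  have h := Real.log_le_sub_one_of_pos (show (0:ℝ) < t⁻¹ by positivity)
  rw [Real.log_inv] at h
  rw [one_div]
  linarith

lemma aux_lower {Y : Type*} [Fintype Y] (q g : Y → ℝ)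
    (hq : ∀ y, 0 < q y) (hg : ∀ y, 0 < g y)
    (hq1 : ∑ y, q y = 1) (hqg : ∑ y, q y * g y = 1) (K : ℕ) :
    Real.log ((K : ℝ) + 1) ≤
      ∑ y1, (q y1 * g y1) * ∑ ys : Fin K → Y, (∏ j, q (ys j)) *
        Real.log (g y1 + ∑ j, g (ys j)) := by
  have hT : ∀ (y1 : Y) (ys : Fin K → Y), 0 < g y1 + ∑ j, g (ys j) :=
    fun y1 ys => add_pos_of_pos_of_nonneg (hg y1)
      (Finset.sum_nonneg fun j _ => (hg _).le)
  have hw : ∀ ys : Fin K → Y, 0 < ∏ j, q (ys j) :=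
    fun ys => Finset.prod_pos fun j _ => hq _
  have hK1 : (0:ℝ) < (K : ℝ) + 1 := by positivity
  -- the key ratio identity : ((K+1)) * S = 1
  have hkey : ((K : ℝ) + 1) *
      (∑ y1, ∑ ys : Fin K → Y, (q y1 * ∏ j, q (ys j)) *
        (g y1 / (g y1 + ∑ j, g (ys j)))) = 1 := by
    have h1 : ((K : ℝ) + 1) *
        (∑ y1, ∑ ys : Fin K → Y, (q y1 * ∏ j, q (ys j)) *
          (g y1 / (g y1 + ∑ j, g (ys j))))
        = (∑ y1, ∑ ys : Fin K → Y, (q y1 * ∏ j, q (ys j)) *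
            (g y1 / (g y1 + ∑ j, g (ys j))))
          + ∑ i : Fin K, ∑ y1, ∑ ys : Fin K → Y, (q y1 * ∏ j, q (ys j)) *
              (g (ys i) / (g y1 + ∑ j, g (ys j))) := by
      rw [Finset.sum_congr rfl (fun i (_ : i ∈ Finset.univ) => aux_sym q g i)]
      rw [Finset.sum_const, Finset.card_univ, Fintype.card_fin, nsmul_eq_mul]
      ring
    rw [h1]
    have h2 : ∑ i : Fin K, ∑ y1, ∑ ys : Fin K → Y, (q y1 * ∏ j, q (ys j)) *
          (g (ys i) / (g y1 + ∑ j, g (ys j)))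
        = ∑ y1, ∑ ys : Fin K → Y, (q y1 * ∏ j, q (ys j)) *
            ((∑ i, g (ys i)) / (g y1 + ∑ j, g (ys j))) := by
      rw [Finset.sum_comm]
      refine Finset.sum_congr rfl fun y1 _ => ?_
      rw [Finset.sum_comm]
      refine Finset.sum_congr rfl fun ys _ => ?_
      rw [← Finset.mul_sum, ← Finset.sum_div]
    rw [h2, ← Finset.sum_add_distrib]
    have h3 : ∀ y1 ∈ Finset.univ, (∑ ys : Fin K → Y, (q y1 * ∏ j, q (ys j)) *
          (g y1 / (g y1 + ∑ j, g (ys j))))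
        + (∑ ys : Fin K → Y, (q y1 * ∏ j, q (ys j)) *
            ((∑ i, g (ys i)) / (g y1 + ∑ j, g (ys j))))
        = q y1 := by
      intro y1 _
      rw [← Finset.sum_add_distrib]
      have h4 : ∀ ys : Fin K → Y, (q y1 * ∏ j, q (ys j)) *
            (g y1 / (g y1 + ∑ j, g (ys j)))
          + (q y1 * ∏ j, q (ys j)) *
            ((∑ i, g (ys i)) / (g y1 + ∑ j, g (ys j)))
          = q y1 * ∏ j, q (ys j) := by
        intro ys
        rw [← mul_add, ← add_div, div_self (hT y1 ys).ne']
        ring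
      rw [Finset.sum_congr rfl (fun ys _ => h4 ys), ← Finset.mul_sum, aux_weight_sum q hq1 K, mul_one]
    rw [Finset.sum_congr rfl h3, hq1]
  -- total mass of the weights
  have hsumw : ∑ y1, ∑ ys : Fin K → Y, (q y1 * g y1 * ∏ j, q (ys j)) = 1 := by
    have h5 : ∀ y1 : Y, ∑ ys : Fin K → Y, (q y1 * g y1 * ∏ j, q (ys j))
        = q y1 * g y1 := by
      intro y1
      rw [← Finset.mul_sum, aux_weight_sum q hq1 K, mul_one]
    rw [Finset.sum_congr rfl (fun y1 _ => h5 y1), hqg]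
  -- per-term inequality
  have hterm : ∀ (y1 : Y) (ys : Fin K → Y),
      (q y1 * g y1 * ∏ j, q (ys j)) * (Real.log ((K:ℝ)+1) + 1)
        - ((K:ℝ)+1) * ((q y1 * ∏ j, q (ys j)) * (g y1 / (g y1 + ∑ j, g (ys j))))
      ≤ (q y1 * g y1 * ∏ j, q (ys j)) * Real.log (g y1 + ∑ j, g (ys j)) := by
    intro y1 ys
    have hTpos := hT y1 ys
    have h1 : 1 - ((K:ℝ)+1)/(g y1 + ∑ j, g (ys j))
        ≤ Real.log (g y1 + ∑ j, g (ys j)) - Real.log ((K:ℝ)+1) := by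
      have h := aux_log_ge ((g y1 + ∑ j, g (ys j)) / ((K:ℝ)+1)) (by positivity)
      rw [Real.log_div hTpos.ne' hK1.ne', one_div_div] at h
      linarith
    have hwpos : 0 ≤ q y1 * g y1 * ∏ j, q (ys j) :=
      le_of_lt (mul_pos (mul_pos (hq _) (hg _)) (hw _))
    have e1 : ((K:ℝ)+1) * ((q y1 * ∏ j, q (ys j)) * (g y1 / (g y1 + ∑ j, g (ys j))))
        = (q y1 * g y1 * ∏ j, q (ys j)) * (((K:ℝ)+1)/(g y1 + ∑ j, g (ys j))) := by
      ring
    rw [e1]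
    nlinarith [mul_le_mul_of_nonneg_left h1 hwpos]
  -- sum it up
  have hsum : ∑ y1, ∑ ys : Fin K → Y,
      ((q y1 * g y1 * ∏ j, q (ys j)) * (Real.log ((K:ℝ)+1) + 1)
        - ((K:ℝ)+1) * ((q y1 * ∏ j, q (ys j)) * (g y1 / (g y1 + ∑ j, g (ys j)))))
      ≤ ∑ y1, ∑ ys : Fin K → Y,
          (q y1 * g y1 * ∏ j, q (ys j)) * Real.log (g y1 + ∑ j, g (ys j)) :=
    Finset.sum_le_sum fun y1 _ => Finset.sum_le_sum fun ys _ => hterm y1 ys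
  have hLHS : ∑ y1, ∑ ys : Fin K → Y,
      ((q y1 * g y1 * ∏ j, q (ys j)) * (Real.log ((K:ℝ)+1) + 1)
        - ((K:ℝ)+1) * ((q y1 * ∏ j, q (ys j)) * (g y1 / (g y1 + ∑ j, g (ys j)))))
      = Real.log ((K:ℝ)+1) := by
    simp only [Finset.sum_sub_distrib, ← Finset.sum_mul, ← Finset.mul_sum]
    rw [hqg, aux_weight_sum q hq1 K, hkey]
    ring
  have hRHS : ∑ y1, (q y1 * g y1) * ∑ ys : Fin K → Y, (∏ j, q (ys j)) *
        Real.log (g y1 + ∑ j, g (ys j))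
      = ∑ y1, ∑ ys : Fin K → Y,
          (q y1 * g y1 * ∏ j, q (ys j)) * Real.log (g y1 + ∑ j, g (ys j)) := by
    refine Finset.sum_congr rfl fun y1 _ => ?_
    rw [Finset.mul_sum]
    exact Finset.sum_congr rfl fun ys _ => by ring
  rw [hRHS]
  calc Real.log ((K:ℝ)+1) = _ := hLHS.symm
    _ ≤ _ := hsum

lemma aux_upper {Z : Type*} [Fintype Z] (q g : Z → ℝ)
    (hq : ∀ z, 0 < q z) (hg : ∀ z, 0 < g z)
    (hq1 : ∑ z, q z = 1) (hqg : ∑ z, q z * g z = 1) {K : ℕ} (hK : 0 < K) :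
    ∑ zs : Fin K → Z, (∏ j, q (zs j)) * Real.log (∑ j, g (zs j)) ≤ Real.log (K : ℝ) := by
  have : Nonempty (Fin K) := Fin.pos_iff_nonempty.mp hK
  have hKpos : (0:ℝ) < (K : ℝ) := by exact_mod_cast hK
  have hS : ∀ zs : Fin K → Z, 0 < ∑ j, g (zs j) :=
    fun zs => Finset.sum_pos (fun j _ => hg _) Finset.univ_nonempty
  have hw : ∀ zs : Fin K → Z, 0 < ∏ j, q (zs j) :=
    fun zs => Finset.prod_pos fun j _ => hq _
  have hterm : ∀ zs : Fin K → Z, (∏ j, q (zs j)) * Real.log (∑ j, g (zs j))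
      ≤ (∏ j, q (zs j)) * (Real.log (K:ℝ) - 1)
        + ((K:ℝ))⁻¹ * ((∏ j, q (zs j)) * (∑ j, g (zs j))) := by
    intro zs
    have h := Real.log_le_sub_one_of_pos (div_pos (hS zs) hKpos)
    rw [Real.log_div (hS zs).ne' hKpos.ne'] at h
    have h2 : Real.log (∑ j, g (zs j)) ≤ Real.log (K:ℝ) - 1 + ((K:ℝ))⁻¹ * (∑ j, g (zs j)) := by
      rw [div_eq_inv_mul] at h
      linarith
    nlinarith [mul_le_mul_of_nonneg_left h2 (hw zs).le]
  calc ∑ zs : Fin K → Z, (∏ j, q (zs j)) * Real.log (∑ j, g (zs j))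
      ≤ ∑ zs : Fin K → Z, ((∏ j, q (zs j)) * (Real.log (K:ℝ) - 1)
          + ((K:ℝ))⁻¹ * ((∏ j, q (zs j)) * (∑ j, g (zs j)))) :=
        Finset.sum_le_sum fun zs _ => hterm zs
    _ = Real.log (K : ℝ) := by
        rw [Finset.sum_add_distrib, ← Finset.sum_mul, aux_weight_sum q hq1 K, one_mul,
          ← Finset.mul_sum]
        have h3 : ∑ zs : Fin K → Z, (∏ j, q (zs j)) * (∑ j, g (zs j)) = (K : ℝ) := by
          have h4 : ∀ zs : Fin K → Z, (∏ j, q (zs j)) * (∑ j, g (zs j))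
              = ∑ j, (∏ i, q (zs i)) * g (zs j) := fun zs => Finset.mul_sum _ _ _
          rw [Finset.sum_congr rfl (fun zs _ => h4 zs), Finset.sum_comm]
          rw [Finset.sum_congr rfl (fun j (_ : j ∈ Finset.univ) => aux_weight_g_sum q g hq1 hqg j)]
          simp
        rw [h3]
        field_simp
        ring

/-- Proposition 2 of the paper: for a strictly positive joint
pmf on `X × Y × Z`, the information gain `I(X;Y) − I(X;Z)` is lower bounded
by `L_upper − L_lower`, where `L_lower` is the InfoNCE loss for `(X,Y)` with
the optimal critic (denominator over the positive plus `W − 1` negatives) and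
`L_upper` is the contrastive loss for `(X,Z)` whose denominator ranges only
over the `W − 1` negatives. -/
theorem information_gain_lower_bound
    {X Y Z : Type*} [Fintype X] [Fintype Y] [Fintype Z]
    [Nonempty X] [Nonempty Y] [Nonempty Z]
    (p : X × Y × Z → ℝ)
    (hp_pos : ∀ a : X × Y × Z, 0 < p a)
    (hp_sum : ∑ a : X × Y × Z, p a = 1)
    (pX : X → ℝ) (hpX : ∀ x, pX x = ∑ y, ∑ z, p (x, y, z))
    (pY : Y → ℝ) (hpY : ∀ y, pY y = ∑ x, ∑ z, p (x, y, z))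
    (pZ : Z → ℝ) (hpZ : ∀ z, pZ z = ∑ x, ∑ y, p (x, y, z))
    (pXY : X × Y → ℝ) (hpXY : ∀ x y, pXY (x, y) = ∑ z, p (x, y, z))
    (pXZ : X × Z → ℝ) (hpXZ : ∀ x z, pXZ (x, z) = ∑ y, p (x, y, z))
    (IXY : ℝ)
    (hIXY : IXY = ∑ x, ∑ y, pXY (x, y) * Real.log (pXY (x, y) / (pX x * pY y)))
    (IXZ : ℝ)
    (hIXZ : IXZ = ∑ x, ∑ z, pXZ (x, z) * Real.log (pXZ (x, z) / (pX x * pZ z)))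
    (gY : X × Y → ℝ) (hgY : ∀ x y, gY (x, y) = pXY (x, y) / (pX x * pY y))
    (gZ : X × Z → ℝ) (hgZ : ∀ x z, gZ (x, z) = pXZ (x, z) / (pX x * pZ z))
    (W : ℕ) (hW : 2 ≤ W)
    (Llower : ℝ)
    (hLlower : Llower = - ∑ x, ∑ y₁, pXY (x, y₁) *
        ∑ ys : Fin (W - 1) → Y, (∏ j, pY (ys j)) *
          Real.log (gY (x, y₁) / (gY (x, y₁) + ∑ j, gY (x, ys j))))
    (Lupper : ℝ)
    (hLupper : Lupper = - ∑ x, ∑ zpos, pXZ (x, zpos) *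
        ∑ zs : Fin (W - 1) → Z, (∏ j, pZ (zs j)) *
          Real.log (gZ (x, zpos) / ∑ j, gZ (x, zs j))) :
    Lupper - Llower ≤ IXY - IXZ := by
  have hK : 0 < W - 1 := by omega
  have : Nonempty (Fin (W - 1)) := Fin.pos_iff_nonempty.mp hK
  -- positivity of marginals
  have hpXpos : ∀ x, 0 < pX x := fun x => by
    rw [hpX]
    exact Finset.sum_pos (fun y _ => Finset.sum_pos (fun z _ => hp_pos _)
      Finset.univ_nonempty) Finset.univ_nonempty
  have hpYpos : ∀ y, 0 < pY y := fun y => by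
    rw [hpY]
    exact Finset.sum_pos (fun x _ => Finset.sum_pos (fun z _ => hp_pos _)
      Finset.univ_nonempty) Finset.univ_nonempty
  have hpZpos : ∀ z, 0 < pZ z := fun z => by
    rw [hpZ]
    exact Finset.sum_pos (fun x _ => Finset.sum_pos (fun y _ => hp_pos _)
      Finset.univ_nonempty) Finset.univ_nonempty
  have hpXYpos : ∀ x y, 0 < pXY (x, y) := fun x y => by
    rw [hpXY]
    exact Finset.sum_pos (fun z _ => hp_pos _) Finset.univ_nonempty
  have hpXZpos : ∀ x z, 0 < pXZ (x, z) := fun x z => by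
    rw [hpXZ]
    exact Finset.sum_pos (fun y _ => hp_pos _) Finset.univ_nonempty
  have hgYpos : ∀ x y, 0 < gY (x, y) := fun x y => by
    rw [hgY]
    exact div_pos (hpXYpos x y) (mul_pos (hpXpos x) (hpYpos y))
  have hgZpos : ∀ x z, 0 < gZ (x, z) := fun x z => by
    rw [hgZ]
    exact div_pos (hpXZpos x z) (mul_pos (hpXpos x) (hpZpos z))
  -- total-mass identities
  have hp_sum' : ∑ x, ∑ y, ∑ z, p (x, y, z) = 1 := by
    rw [Fintype.sum_prod_type] at hp_sum
    refine Eq.trans ?_ hp_sum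
    exact Finset.sum_congr rfl fun x _ => (Fintype.sum_prod_type (fun yz : Y × Z => p (x, yz))).symm
  have hsumX : ∑ x, pX x = 1 := by
    rw [Finset.sum_congr rfl (fun x _ => hpX x)]
    exact hp_sum'
  have hsumY : ∑ y, pY y = 1 := by
    rw [Finset.sum_congr rfl (fun y _ => hpY y), Finset.sum_comm]
    exact hp_sum'
  have hsumZ : ∑ z, pZ z = 1 := by
    rw [Finset.sum_congr rfl (fun z _ => hpZ z), Finset.sum_comm]
    exact (Finset.sum_congr rfl fun x _ => Finset.sum_comm).trans hp_sum'
  have hmargY : ∀ x, ∑ y, pXY (x, y) = pX x := fun x => by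
    rw [Finset.sum_congr rfl (fun y _ => hpXY x y), hpX]
  have hmargZ : ∀ x, ∑ z, pXZ (x, z) = pX x := fun x => by
    rw [Finset.sum_congr rfl (fun z _ => hpXZ x z), hpX, Finset.sum_comm]
  -- critic expectations
  have hqgY : ∀ x, ∑ y, pY y * gY (x, y) = 1 := fun x => by
    have h : ∀ y : Y, pY y * gY (x, y) = pXY (x, y) / pX x := fun y => by
      rw [hgY]
      field_simp [(hpXpos x).ne', (hpYpos y).ne']
    rw [Finset.sum_congr rfl (fun y _ => h y), ← Finset.sum_div, hmargY x,
      div_self (hpXpos x).ne']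
  have hqgZ : ∀ x, ∑ z, pZ z * gZ (x, z) = 1 := fun x => by
    have h : ∀ z : Z, pZ z * gZ (x, z) = pXZ (x, z) / pX x := fun z => by
      rw [hgZ]
      field_simp [(hpXpos x).ne', (hpZpos z).ne']
    rw [Finset.sum_congr rfl (fun z _ => h z), ← Finset.sum_div, hmargZ x,
      div_self (hpXpos x).ne']
  have hwY : ∑ ys : Fin (W - 1) → Y, ∏ j, pY (ys j) = 1 := aux_weight_sum pY hsumY _
  have hwZ : ∑ zs : Fin (W - 1) → Z, ∏ j, pZ (zs j) = 1 := aux_weight_sum pZ hsumZ _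
  have hTY : ∀ (x : X) (y : Y) (ys : Fin (W - 1) → Y),
      0 < gY (x, y) + ∑ j, gY (x, ys j) := fun x y ys =>
    add_pos_of_pos_of_nonneg (hgYpos x y)
      (Finset.sum_nonneg fun j _ => (hgYpos x (ys j)).le)
  have hSZ : ∀ (x : X) (zs : Fin (W - 1) → Z), 0 < ∑ j, gZ (x, zs j) := fun x zs =>
    Finset.sum_pos (fun j _ => hgZpos x (zs j)) Finset.univ_nonempty
  -- rewrite I + L on both sides
  have hLl : IXY + Llower = ∑ x, ∑ y, pXY (x, y) *
      ∑ ys : Fin (W - 1) → Y, (∏ j, pY (ys j)) *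
        Real.log (gY (x, y) + ∑ j, gY (x, ys j)) := by
    rw [hIXY, hLlower, ← sub_eq_add_neg, ← Finset.sum_sub_distrib]
    refine Finset.sum_congr rfl fun x _ => ?_
    rw [← Finset.sum_sub_distrib]
    refine Finset.sum_congr rfl fun y _ => ?_
    have e1 : ∀ ys : Fin (W - 1) → Y, (∏ j, pY (ys j)) *
          Real.log (gY (x, y) / (gY (x, y) + ∑ j, gY (x, ys j)))
        = Real.log (gY (x, y)) * (∏ j, pY (ys j))
          - (∏ j, pY (ys j)) * Real.log (gY (x, y) + ∑ j, gY (x, ys j)) := by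
      intro ys
      rw [Real.log_div (hgYpos x y).ne' (hTY x y ys).ne']
      ring
    rw [Finset.sum_congr rfl (fun ys _ => e1 ys), Finset.sum_sub_distrib,
      ← Finset.mul_sum, hwY, mul_one, ← hgY x y]
    ring
  have hLu : IXZ + Lupper = ∑ x, ∑ z, pXZ (x, z) *
      ∑ zs : Fin (W - 1) → Z, (∏ j, pZ (zs j)) *
        Real.log (∑ j, gZ (x, zs j)) := by
    rw [hIXZ, hLupper, ← sub_eq_add_neg, ← Finset.sum_sub_distrib]
    refine Finset.sum_congr rfl fun x _ => ?_
    rw [← Finset.sum_sub_distrib]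
    refine Finset.sum_congr rfl fun z _ => ?_
    have e1 : ∀ zs : Fin (W - 1) → Z, (∏ j, pZ (zs j)) *
          Real.log (gZ (x, z) / ∑ j, gZ (x, zs j))
        = Real.log (gZ (x, z)) * (∏ j, pZ (zs j))
          - (∏ j, pZ (zs j)) * Real.log (∑ j, gZ (x, zs j)) := by
      intro zs
      rw [Real.log_div (hgZpos x z).ne' (hSZ x zs).ne']
      ring
    rw [Finset.sum_congr rfl (fun zs _ => e1 zs), Finset.sum_sub_distrib,
      ← Finset.mul_sum, hwZ, mul_one, ← hgZ x z]
    ring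
  -- lower bound for the (X,Y) side
  have hfactY : ∀ x y, pXY (x, y) = pX x * (pY y * gY (x, y)) := fun x y => by
    rw [hgY x y]
    field_simp [(hpXpos x).ne', (hpYpos y).ne']
  have hYb : Real.log (((W - 1 : ℕ) : ℝ) + 1) ≤ ∑ x, ∑ y, pXY (x, y) *
      ∑ ys : Fin (W - 1) → Y, (∏ j, pY (ys j)) *
        Real.log (gY (x, y) + ∑ j, gY (x, ys j)) := by
    have hinner : ∀ x : X, Real.log (((W - 1 : ℕ) : ℝ) + 1) ≤
        ∑ y, (pY y * gY (x, y)) * ∑ ys : Fin (W - 1) → Y, (∏ j, pY (ys j)) *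
          Real.log (gY (x, y) + ∑ j, gY (x, ys j)) := fun x =>
      aux_lower pY (fun y => gY (x, y)) hpYpos (fun y => hgYpos x y) hsumY (hqgY x) (W - 1)
    calc Real.log (((W - 1 : ℕ) : ℝ) + 1)
        = ∑ x, pX x * Real.log (((W - 1 : ℕ) : ℝ) + 1) := by
          rw [← Finset.sum_mul, hsumX, one_mul]
      _ ≤ ∑ x, pX x * ∑ y, (pY y * gY (x, y)) * ∑ ys : Fin (W - 1) → Y,
            (∏ j, pY (ys j)) * Real.log (gY (x, y) + ∑ j, gY (x, ys j)) :=
          Finset.sum_le_sum fun x _ => mul_le_mul_of_nonneg_left (hinner x) (hpXpos x).le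
      _ = _ := by
          refine Finset.sum_congr rfl fun x _ => ?_
          rw [Finset.mul_sum]
          refine Finset.sum_congr rfl fun y _ => ?_
          rw [hfactY x y]
          ring
  -- upper bound for the (X,Z) side
  have hZb : (∑ x, ∑ z, pXZ (x, z) * ∑ zs : Fin (W - 1) → Z, (∏ j, pZ (zs j)) *
      Real.log (∑ j, gZ (x, zs j))) ≤ Real.log ((W - 1 : ℕ) : ℝ) := by
    have hC : ∀ x : X, (∑ zs : Fin (W - 1) → Z, (∏ j, pZ (zs j)) *
        Real.log (∑ j, gZ (x, zs j))) ≤ Real.log ((W - 1 : ℕ) : ℝ) := fun x =>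
      aux_upper pZ (fun z => gZ (x, z)) hpZpos (fun z => hgZpos x z) hsumZ (hqgZ x) hK
    calc ∑ x, ∑ z, pXZ (x, z) * ∑ zs : Fin (W - 1) → Z, (∏ j, pZ (zs j)) *
          Real.log (∑ j, gZ (x, zs j))
        = ∑ x, pX x * ∑ zs : Fin (W - 1) → Z, (∏ j, pZ (zs j)) *
            Real.log (∑ j, gZ (x, zs j)) := by
          refine Finset.sum_congr rfl fun x _ => ?_
          rw [← Finset.sum_mul, hmargZ x]
      _ ≤ ∑ x, pX x * Real.log ((W - 1 : ℕ) : ℝ) :=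
          Finset.sum_le_sum fun x _ => mul_le_mul_of_nonneg_left (hC x) (hpXpos x).le
      _ = Real.log ((W - 1 : ℕ) : ℝ) := by rw [← Finset.sum_mul, hsumX, one_mul]
  have hlog2 : Real.log ((W - 1 : ℕ) : ℝ) ≤ Real.log (((W - 1 : ℕ) : ℝ) + 1) := by
    have h0 : (0:ℝ) < ((W - 1 : ℕ) : ℝ) := by exact_mod_cast hK
    exact Real.log_le_log h0 (by linarith)
  linarith [hLl, hLu, hYb, hZb, hlog2]
end
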